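/- Let G be a finite simple undirected graph and let {p1,p2,p3} induce a triangle in G. The number of unordered pairs {v1,v2} ⊆ adj({p1,p2,p3}) such that the subgraph induced on {p1,p2,p3,v1,v2} is the complete graph K5 minus exactly one edge equals C(n_z,2) − m(Z,Z) + m(Y12,Z) + m(Y13,Z) + m(Y23,Z) (Theorem 3, Table 6, K5-minus-an-edge row). -/

import Mathlib

open Finset

variable {V : Type*}

/-- `adj(W)`: vertices outside `W` having a neighbor in `W`. -/
def adjW [Fintype V] [DecidableEq V] (G : SimpleGraph V) [DecidableRel G.Adj] (W : Finset V) :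
    Finset V :=
  univ.filter fun x => x ∉ W ∧ ∃ w ∈ W, G.Adj x w

/-- `m(S,T)`: the number of edges of `G` with one endpoint in `S` and the other in `T`. -/
def mE [DecidableEq V] (G : SimpleGraph V) [DecidableRel G.Adj] (S T : Finset V) : ℕ :=
  (((S ×ˢ T).filter fun p => G.Adj p.1 p.2).image fun p => ({p.1, p.2} : Finset V)).card

/-- `Z`: vertices (outside the triangle) adjacent to all of `p₁`, `p₂`, `p₃`. -/
def tZ [Fintype V] (G : SimpleGraph V) [DecidableRel G.Adj] (p₁ p₂ p₃ : V) : Finset V :=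
  univ.filter fun w => G.Adj p₁ w ∧ G.Adj p₂ w ∧ G.Adj p₃ w

/-- `Y₁₂`-style set: vertices outside the triangle adjacent to exactly `pa` and `pb`
(and not to `pc`). -/
def tY [Fintype V] [DecidableEq V] (G : SimpleGraph V) [DecidableRel G.Adj]
    (pa pb pc : V) : Finset V :=
  univ.filter fun w => w ≠ pc ∧ G.Adj pa w ∧ G.Adj pb w ∧ ¬ G.Adj pc w

set_option maxHeartbeats 2000000

section Helpers

variable {V : Type*} [DecidableEq V]


lemma fpair_eq_iff {a b c d : V} :
    ({a,b} : Finset V) = ({c,d} : Finset V) ↔ (a = c ∧ b = d) ∨ (a = d ∧ b = c) := by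
  rw [← Finset.coe_inj]
  simp only [Finset.coe_insert, Finset.coe_singleton]
  exact Set.pair_eq_pair_iff

lemma fpair_ne_left {w z x y : V} (h1 : w ≠ x) (h2 : w ≠ y) :
    ({w,z} : Finset V) ≠ ({x,y} : Finset V) := by
  simp only [ne_eq, fpair_eq_iff]; tauto

lemma fpair_ne_right {w z x y : V} (h1 : z ≠ x) (h2 : z ≠ y) :
    ({w,z} : Finset V) ≠ ({x,y} : Finset V) := by
  simp only [ne_eq, fpair_eq_iff]; tauto

lemma mem_of_pair_eq_fst {a b c d : V} (h : ({c,d}:Finset V) = {a,b}) : c = a ∨ c = b := by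
  rcases fpair_eq_iff.mp h with ⟨h1,h2⟩|⟨h1,h2⟩ <;> tauto

lemma mem_of_pair_eq_snd {a b c d : V} (h : ({c,d}:Finset V) = {a,b}) : d = a ∨ d = b := by
  rcases fpair_eq_iff.mp h with ⟨h1,h2⟩|⟨h1,h2⟩ <;> tauto


lemma ne_pair_swap {w z x y : V} (h : ({w,z}:Finset V) ≠ {x,y}) :
    ({w,z}:Finset V) ≠ {y,x} := fun he => h (he.trans (Finset.pair_comm y x))

def zP (G : SimpleGraph V) (p₁ p₂ p₃ w : V) : Prop :=
  G.Adj p₁ w ∧ G.Adj p₂ w ∧ G.Adj p₃ w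

def yP (G : SimpleGraph V) (pa pb pc w : V) : Prop :=
  w ≠ pc ∧ G.Adj pa w ∧ G.Adj pb w ∧ ¬ G.Adj pc w

lemma case_pv {G : SimpleGraph V} {pa pb pc a b : V}
    (hpab : pa ≠ pb) (hpac : pa ≠ pc)
    (hapa : a ≠ pa) (hapb : a ≠ pb) (hapc : a ≠ pc)
    (hbpa : b ≠ pa) (hbpb : b ≠ pb) (hbpc : b ≠ pc) (hab : a ≠ b)
    (hnadj : ¬ G.Adj pa a)
    (hall : ∀ w z, (w = pa ∨ w = pb ∨ w = pc ∨ w = a ∨ w = b) →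
      (z = pa ∨ z = pb ∨ z = pc ∨ z = a ∨ z = b) → w ≠ z →
      ({w,z} : Finset V) ≠ {pa, a} → G.Adj w z) :
    (G.Adj pb a ∧ G.Adj pc a ∧ ¬ G.Adj pa a) ∧
    (G.Adj pa b ∧ G.Adj pb b ∧ G.Adj pc b) ∧ G.Adj a b := by
  refine ⟨⟨?_, ?_, hnadj⟩, ⟨?_, ?_, ?_⟩, ?_⟩
  · exact hall pb a (by tauto) (by tauto) hapb.symm (fpair_ne_left hpab.symm hapb.symm)
  · exact hall pc a (by tauto) (by tauto) hapc.symm (fpair_ne_left hpac.symm hapc.symm)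
  · exact hall pa b (by tauto) (by tauto) hbpa.symm (fpair_ne_right hbpa hab.symm)
  · exact hall pb b (by tauto) (by tauto) hbpb.symm (fpair_ne_left hpab.symm hapb.symm)
  · exact hall pc b (by tauto) (by tauto) hbpc.symm (fpair_ne_left hpac.symm hapc.symm)
  · exact hall a b (by tauto) (by tauto) hab (fpair_ne_right hbpa hab.symm)

lemma case_vv {G : SimpleGraph V} {p₁ p₂ p₃ a b : V}
    (n11 : a ≠ p₁) (n12 : a ≠ p₂) (n13 : a ≠ p₃)
    (n21 : b ≠ p₁) (n22 : b ≠ p₂) (n23 : b ≠ p₃)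
    (hall : ∀ w z, (w = p₁ ∨ w = p₂ ∨ w = p₃ ∨ w = a ∨ w = b) →
      (z = p₁ ∨ z = p₂ ∨ z = p₃ ∨ z = a ∨ z = b) → w ≠ z →
      ({w,z} : Finset V) ≠ {a, b} → G.Adj w z) :
    zP G p₁ p₂ p₃ a ∧ zP G p₁ p₂ p₃ b := by
  refine ⟨⟨?_, ?_, ?_⟩, ⟨?_, ?_, ?_⟩⟩
  · exact hall p₁ a (by tauto) (by tauto) n11.symm (fpair_ne_left n11.symm n21.symm)
  · exact hall p₂ a (by tauto) (by tauto) n12.symm (fpair_ne_left n12.symm n22.symm)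
  · exact hall p₃ a (by tauto) (by tauto) n13.symm (fpair_ne_left n13.symm n23.symm)
  · exact hall p₁ b (by tauto) (by tauto) n21.symm (fpair_ne_left n11.symm n21.symm)
  · exact hall p₂ b (by tauto) (by tauto) n22.symm (fpair_ne_left n12.symm n22.symm)
  · exact hall p₃ b (by tauto) (by tauto) n23.symm (fpair_ne_left n13.symm n23.symm)

lemma back_vv {G : SimpleGraph V} [DecidableRel G.Adj] {p₁ p₂ p₃ a b : V}
    (h12 : G.Adj p₁ p₂) (h13 : G.Adj p₁ p₃) (h23 : G.Adj p₂ p₃)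
    (hz1 : zP G p₁ p₂ p₃ a) (hz2 : zP G p₁ p₂ p₃ b) (hn : ¬ G.Adj a b) (hab : a ≠ b) :
    ∃ x ∈ ({p₁,p₂,p₃,a,b} : Finset V), ∃ y ∈ ({p₁,p₂,p₃,a,b} : Finset V),
      x ≠ y ∧ ¬ G.Adj x y ∧
      ∀ w ∈ ({p₁,p₂,p₃,a,b} : Finset V), ∀ z ∈ ({p₁,p₂,p₃,a,b} : Finset V),
        w ≠ z → ({w,z} : Finset V) ≠ {x,y} → G.Adj w z := by
  obtain ⟨za1, za2, za3⟩ := hz1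
  obtain ⟨zb1, zb2, zb3⟩ := hz2
  have s21 := h12.symm; have s31 := h13.symm; have s32 := h23.symm
  have sa1 := za1.symm; have sa2 := za2.symm; have sa3 := za3.symm
  have sb1 := zb1.symm; have sb2 := zb2.symm; have sb3 := zb3.symm
  refine ⟨a, by simp, b, by simp, hab, hn, ?_⟩
  intro w hw z hz hwz hp
  simp only [Finset.mem_insert, Finset.mem_singleton] at hw hz
  rcases hw with rfl|rfl|rfl|rfl|rfl <;> rcases hz with rfl|rfl|rfl|rfl|rfl <;>
    first
    | exact absurd rfl hwz
    | exact absurd rfl hp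
    | exact absurd (Finset.pair_comm _ _) hp
    | assumption

lemma back_pv {G : SimpleGraph V} [DecidableRel G.Adj] {pa pb pc a b : V}
    (hapa : a ≠ pa)
    (h1 : G.Adj pa pb) (h2 : G.Adj pa pc) (h3 : G.Adj pb pc)
    (hya : G.Adj pb a) (hyc : G.Adj pc a) (hna : ¬ G.Adj pa a)
    (hzb1 : G.Adj pa b) (hzb2 : G.Adj pb b) (hzb3 : G.Adj pc b) (hvv : G.Adj a b) :
    ∃ x ∈ ({pa,pb,pc,a,b} : Finset V), ∃ y ∈ ({pa,pb,pc,a,b} : Finset V),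
      x ≠ y ∧ ¬ G.Adj x y ∧
      ∀ w ∈ ({pa,pb,pc,a,b} : Finset V), ∀ z ∈ ({pa,pb,pc,a,b} : Finset V),
        w ≠ z → ({w,z} : Finset V) ≠ {x,y} → G.Adj w z := by
  have s1 := h1.symm; have s2 := h2.symm; have s3 := h3.symm
  have t1 := hya.symm; have t2 := hyc.symm
  have u1 := hzb1.symm; have u2 := hzb2.symm; have u3 := hzb3.symm
  have v1 := hvv.symm
  refine ⟨pa, by simp, a, by simp, hapa.symm, hna, ?_⟩
  intro w hw z hz hwz hp
  simp only [Finset.mem_insert, Finset.mem_singleton] at hw hz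
  rcases hw with rfl|rfl|rfl|rfl|rfl <;> rcases hz with rfl|rfl|rfl|rfl|rfl <;>
    first
    | exact absurd rfl hwz
    | exact absurd rfl hp
    | exact absurd (Finset.pair_comm _ _) hp
    | assumption

lemma classify {G : SimpleGraph V} [DecidableRel G.Adj] {p₁ p₂ p₃ v₁ v₂ : V}
    (h12 : G.Adj p₁ p₂) (h13 : G.Adj p₁ p₃) (h23 : G.Adj p₂ p₃)
    (n11 : v₁ ≠ p₁) (n12 : v₁ ≠ p₂) (n13 : v₁ ≠ p₃)
    (n21 : v₂ ≠ p₁) (n22 : v₂ ≠ p₂) (n23 : v₂ ≠ p₃) (nv : v₁ ≠ v₂) :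
    (∃ x ∈ ({p₁,p₂,p₃,v₁,v₂} : Finset V), ∃ y ∈ ({p₁,p₂,p₃,v₁,v₂} : Finset V),
      x ≠ y ∧ ¬ G.Adj x y ∧
      ∀ w ∈ ({p₁,p₂,p₃,v₁,v₂} : Finset V), ∀ z ∈ ({p₁,p₂,p₃,v₁,v₂} : Finset V),
        w ≠ z → ({w,z} : Finset V) ≠ {x,y} → G.Adj w z)
    ↔ (zP G p₁ p₂ p₃ v₁ ∧ zP G p₁ p₂ p₃ v₂ ∧ ¬ G.Adj v₁ v₂) ∨
      (yP G p₁ p₂ p₃ v₁ ∧ zP G p₁ p₂ p₃ v₂ ∧ G.Adj v₁ v₂) ∨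
      (yP G p₁ p₂ p₃ v₂ ∧ zP G p₁ p₂ p₃ v₁ ∧ G.Adj v₁ v₂) ∨
      (yP G p₁ p₃ p₂ v₁ ∧ zP G p₁ p₂ p₃ v₂ ∧ G.Adj v₁ v₂) ∨
      (yP G p₁ p₃ p₂ v₂ ∧ zP G p₁ p₂ p₃ v₁ ∧ G.Adj v₁ v₂) ∨
      (yP G p₂ p₃ p₁ v₁ ∧ zP G p₁ p₂ p₃ v₂ ∧ G.Adj v₁ v₂) ∨
      (yP G p₂ p₃ p₁ v₂ ∧ zP G p₁ p₂ p₃ v₁ ∧ G.Adj v₁ v₂) := by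
  constructor
  · rintro ⟨x, hx, y, hy, hxy, hnadj, hall⟩
    simp only [Finset.mem_insert, Finset.mem_singleton] at hx hy
    have hall' : ∀ w z, (w = p₁ ∨ w = p₂ ∨ w = p₃ ∨ w = v₁ ∨ w = v₂) →
        (z = p₁ ∨ z = p₂ ∨ z = p₃ ∨ z = v₁ ∨ z = v₂) → w ≠ z →
        ({w,z} : Finset V) ≠ {x,y} → G.Adj w z := by
      intro w z hw hz
      exact hall w (by simp only [Finset.mem_insert, Finset.mem_singleton]; exact hw)
        z (by simp only [Finset.mem_insert, Finset.mem_singleton]; exact hz)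
    clear hall
    rcases hx with rfl|rfl|rfl|rfl|rfl <;> rcases hy with rfl|rfl|rfl|rfl|rfl
    · exact absurd rfl hxy
    · exact absurd h12 hnadj
    · exact absurd h13 hnadj
    -- x = p₁, y = v₁  (missing p₁v₁ : Y23 for v₁)
    · obtain ⟨hA, hB, hC⟩ := case_pv h12.ne h13.ne n11 n12 n13 n21 n22 n23 nv hnadj hall'
      exact Or.inr (Or.inr (Or.inr (Or.inr (Or.inr (Or.inl ⟨⟨n11, hA⟩, hB, hC⟩)))))
    -- x = p₁, y = v₂
    · obtain ⟨hA, hB, hC⟩ := case_pv h12.ne h13.ne n21 n22 n23 n11 n12 n13 nv.symm hnadj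
        (fun w z hw hz => hall' w z (by tauto) (by tauto))
      exact Or.inr (Or.inr (Or.inr (Or.inr (Or.inr (Or.inr ⟨⟨n21, hA⟩, hB, hC.symm⟩)))))
    · exact absurd h12.symm hnadj
    · exact absurd rfl hxy
    · exact absurd h23 hnadj
    -- x = p₂, y = v₁  (missing p₂v₁ : Y13 for v₁)
    · obtain ⟨hA, hB, hC⟩ := case_pv h12.ne' h23.ne n12 n11 n13 n22 n21 n23 nv hnadj
        (fun w z hw hz => hall' w z (by tauto) (by tauto))
      exact Or.inr (Or.inr (Or.inr (Or.inl ⟨⟨n12, hA.1, hA.2.1, hA.2.2⟩, ⟨hB.2.1, hB.1, hB.2.2⟩, hC⟩)))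
    -- x = p₂, y = v₂
    · obtain ⟨hA, hB, hC⟩ := case_pv h12.ne' h23.ne n22 n21 n23 n12 n11 n13 nv.symm hnadj
        (fun w z hw hz => hall' w z (by tauto) (by tauto))
      exact Or.inr (Or.inr (Or.inr (Or.inr (Or.inl ⟨⟨n22, hA.1, hA.2.1, hA.2.2⟩, ⟨hB.2.1, hB.1, hB.2.2⟩, hC.symm⟩))))
    · exact absurd h13.symm hnadj
    · exact absurd h23.symm hnadj
    · exact absurd rfl hxy
    -- x = p₃, y = v₁  (missing p₃v₁ : Y12 for v₁)
    · obtain ⟨hA, hB, hC⟩ := case_pv h13.ne' h23.ne' n13 n11 n12 n23 n21 n22 nv hnadj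
        (fun w z hw hz => hall' w z (by tauto) (by tauto))
      exact Or.inr (Or.inl ⟨⟨n13, hA.1, hA.2.1, hA.2.2⟩, ⟨hB.2.1, hB.2.2, hB.1⟩, hC⟩)
    -- x = p₃, y = v₂
    · obtain ⟨hA, hB, hC⟩ := case_pv h13.ne' h23.ne' n23 n21 n22 n13 n11 n12 nv.symm hnadj
        (fun w z hw hz => hall' w z (by tauto) (by tauto))
      exact Or.inr (Or.inr (Or.inl ⟨⟨n23, hA.1, hA.2.1, hA.2.2⟩, ⟨hB.2.1, hB.2.2, hB.1⟩, hC.symm⟩))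
    -- x = v₁, y = p₁
    · obtain ⟨hA, hB, hC⟩ := case_pv h12.ne h13.ne n11 n12 n13 n21 n22 n23 nv (fun h => hnadj (G.adj_symm h))
        (fun w z hw hz hwz hp => hall' w z hw hz hwz
          (ne_pair_swap hp))
      exact Or.inr (Or.inr (Or.inr (Or.inr (Or.inr (Or.inl ⟨⟨n11, hA⟩, hB, hC⟩)))))
    -- x = v₁, y = p₂
    · obtain ⟨hA, hB, hC⟩ := case_pv h12.ne' h23.ne n12 n11 n13 n22 n21 n23 nv (fun h => hnadj (G.adj_symm h))
        (fun w z hw hz hwz hp => hall' w z (by tauto) (by tauto) hwz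
          (ne_pair_swap hp))
      exact Or.inr (Or.inr (Or.inr (Or.inl ⟨⟨n12, hA.1, hA.2.1, hA.2.2⟩, ⟨hB.2.1, hB.1, hB.2.2⟩, hC⟩)))
    -- x = v₁, y = p₃
    · obtain ⟨hA, hB, hC⟩ := case_pv h13.ne' h23.ne' n13 n11 n12 n23 n21 n22 nv (fun h => hnadj (G.adj_symm h))
        (fun w z hw hz hwz hp => hall' w z (by tauto) (by tauto) hwz
          (ne_pair_swap hp))
      exact Or.inr (Or.inl ⟨⟨n13, hA.1, hA.2.1, hA.2.2⟩, ⟨hB.2.1, hB.2.2, hB.1⟩, hC⟩)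
    · exact absurd rfl hxy
    -- x = v₁, y = v₂
    · obtain ⟨hA, hB⟩ := case_vv n11 n12 n13 n21 n22 n23 hall'
      exact Or.inl ⟨hA, hB, hnadj⟩
    -- x = v₂, y = p₁
    · obtain ⟨hA, hB, hC⟩ := case_pv h12.ne h13.ne n21 n22 n23 n11 n12 n13 nv.symm (fun h => hnadj (G.adj_symm h))
        (fun w z hw hz hwz hp => hall' w z (by tauto) (by tauto) hwz
          (ne_pair_swap hp))
      exact Or.inr (Or.inr (Or.inr (Or.inr (Or.inr (Or.inr ⟨⟨n21, hA⟩, hB, hC.symm⟩)))))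
    -- x = v₂, y = p₂
    · obtain ⟨hA, hB, hC⟩ := case_pv h12.ne' h23.ne n22 n21 n23 n12 n11 n13 nv.symm (fun h => hnadj (G.adj_symm h))
        (fun w z hw hz hwz hp => hall' w z (by tauto) (by tauto) hwz
          (ne_pair_swap hp))
      exact Or.inr (Or.inr (Or.inr (Or.inr (Or.inl ⟨⟨n22, hA.1, hA.2.1, hA.2.2⟩, ⟨hB.2.1, hB.1, hB.2.2⟩, hC.symm⟩))))
    -- x = v₂, y = p₃
    · obtain ⟨hA, hB, hC⟩ := case_pv h13.ne' h23.ne' n23 n21 n22 n13 n11 n12 nv.symm (fun h => hnadj (G.adj_symm h))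
        (fun w z hw hz hwz hp => hall' w z (by tauto) (by tauto) hwz
          (ne_pair_swap hp))
      exact Or.inr (Or.inr (Or.inl ⟨⟨n23, hA.1, hA.2.1, hA.2.2⟩, ⟨hB.2.1, hB.2.2, hB.1⟩, hC.symm⟩))
    -- x = v₂, y = v₁
    · obtain ⟨hA, hB⟩ := case_vv n11 n12 n13 n21 n22 n23
        (fun w z hw hz hwz hp => hall' w z hw hz hwz
          (ne_pair_swap hp))
      exact Or.inl ⟨hA, hB, fun h => hnadj h.symm⟩
    · exact absurd rfl hxy
  · rintro (⟨hz1, hz2, hn⟩ | ⟨⟨hy0, hy1, hy2, hy3⟩, hz, ha⟩ | ⟨⟨hy0, hy1, hy2, hy3⟩, hz, ha⟩ |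
      ⟨⟨hy0, hy1, hy2, hy3⟩, hz, ha⟩ | ⟨⟨hy0, hy1, hy2, hy3⟩, hz, ha⟩ |
      ⟨⟨hy0, hy1, hy2, hy3⟩, hz, ha⟩ | ⟨⟨hy0, hy1, hy2, hy3⟩, hz, ha⟩)
    · exact back_vv h12 h13 h23 hz1 hz2 hn nv
    -- Y12 v₁ : missing {p₃, v₁}
    · have hset : ({p₃,p₁,p₂,v₁,v₂} : Finset V) = {p₁,p₂,p₃,v₁,v₂} := by
        ext u; simp only [Finset.mem_insert, Finset.mem_singleton]; tauto
      have H := back_pv n13 h13.symm h23.symm h12 hy1 hy2 hy3 hz.2.2 hz.1 hz.2.1 ha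
      rwa [hset] at H
    -- Y12 v₂ : missing {p₃, v₂}
    · have hset : ({p₃,p₁,p₂,v₂,v₁} : Finset V) = {p₁,p₂,p₃,v₁,v₂} := by
        ext u; simp only [Finset.mem_insert, Finset.mem_singleton]; tauto
      have H := back_pv n23 h13.symm h23.symm h12 hy1 hy2 hy3 hz.2.2 hz.1 hz.2.1 ha.symm
      rwa [hset] at H
    -- Y13 v₁ : missing {p₂, v₁}
    · have hset : ({p₂,p₁,p₃,v₁,v₂} : Finset V) = {p₁,p₂,p₃,v₁,v₂} := by
        ext u; simp only [Finset.mem_insert, Finset.mem_singleton]; tauto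
      have H := back_pv n12 h12.symm h23 h13 hy1 hy2 hy3 hz.2.1 hz.1 hz.2.2 ha
      rwa [hset] at H
    -- Y13 v₂
    · have hset : ({p₂,p₁,p₃,v₂,v₁} : Finset V) = {p₁,p₂,p₃,v₁,v₂} := by
        ext u; simp only [Finset.mem_insert, Finset.mem_singleton]; tauto
      have H := back_pv n22 h12.symm h23 h13 hy1 hy2 hy3 hz.2.1 hz.1 hz.2.2 ha.symm
      rwa [hset] at H
    -- Y23 v₁ : missing {p₁, v₁}
    · exact back_pv n11 h12 h13 h23 hy1 hy2 hy3 hz.1 hz.2.1 hz.2.2 ha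
    -- Y23 v₂
    · have hset : ({p₁,p₂,p₃,v₂,v₁} : Finset V) = {p₁,p₂,p₃,v₁,v₂} := by
        ext u; simp only [Finset.mem_insert, Finset.mem_singleton]; tauto
      have H := back_pv n21 h12 h13 h23 hy1 hy2 hy3 hz.1 hz.2.1 hz.2.2 ha.symm
      rwa [hset] at H



def pAset [Fintype V] (G : SimpleGraph V) [DecidableRel G.Adj] (p₁ p₂ p₃ : V) :
    Finset (Finset V) :=
  ((tZ G p₁ p₂ p₃ ×ˢ tZ G p₁ p₂ p₃).filter fun p => p.1 ≠ p.2 ∧ ¬ G.Adj p.1 p.2).image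
    fun p => ({p.1, p.2} : Finset V)

def pBset [Fintype V] (G : SimpleGraph V) [DecidableRel G.Adj] (pa pb pc p₁ p₂ p₃ : V) :
    Finset (Finset V) :=
  ((tY G pa pb pc ×ˢ tZ G p₁ p₂ p₃).filter fun p => G.Adj p.1 p.2).image
    fun p => ({p.1, p.2} : Finset V)

lemma mem_pAset [Fintype V] {G : SimpleGraph V} [DecidableRel G.Adj] {p₁ p₂ p₃ : V}
    {s : Finset V} :
    s ∈ pAset G p₁ p₂ p₃ ↔ ∃ a b, zP G p₁ p₂ p₃ a ∧ zP G p₁ p₂ p₃ b ∧ a ≠ b ∧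
      ¬ G.Adj a b ∧ ({a,b} : Finset V) = s := by
  simp only [pAset, mem_image, mem_filter, mem_product, Prod.exists, tZ, mem_univ, true_and,
    zP, ne_eq]
  constructor
  · rintro ⟨a, b, ⟨⟨ha, hb⟩, h1, h2⟩, h3⟩
    exact ⟨a, b, ha, hb, h1, h2, h3⟩
  · rintro ⟨a, b, ha, hb, h1, h2, h3⟩
    exact ⟨a, b, ⟨⟨ha, hb⟩, h1, h2⟩, h3⟩

lemma mem_pBset [Fintype V] {G : SimpleGraph V} [DecidableRel G.Adj] {pa pb pc p₁ p₂ p₃ : V}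
    {s : Finset V} :
    s ∈ pBset G pa pb pc p₁ p₂ p₃ ↔ ∃ a b, yP G pa pb pc a ∧ zP G p₁ p₂ p₃ b ∧
      G.Adj a b ∧ ({a,b} : Finset V) = s := by
  simp only [pBset, mem_image, mem_filter, mem_product, Prod.exists, tZ, tY, mem_univ, true_and,
    zP, yP, ne_eq]
  constructor
  · rintro ⟨a, b, ⟨⟨ha, hb⟩, h2⟩, h3⟩
    exact ⟨a, b, ha, hb, h2, h3⟩
  · rintro ⟨a, b, ha, hb, h2, h3⟩
    exact ⟨a, b, ⟨⟨ha, hb⟩, h2⟩, h3⟩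

lemma mem_adjW3 [Fintype V] {G : SimpleGraph V} [DecidableRel G.Adj] {p₁ p₂ p₃ a : V} :
    a ∈ adjW G {p₁,p₂,p₃} ↔
      (a ≠ p₁ ∧ a ≠ p₂ ∧ a ≠ p₃) ∧ (G.Adj a p₁ ∨ G.Adj a p₂ ∨ G.Adj a p₃) := by
  simp only [adjW, mem_filter, mem_univ, true_and, mem_insert, mem_singleton, not_or]
  constructor
  · rintro ⟨h1, w, hw, h2⟩
    refine ⟨h1, ?_⟩
    rcases hw with rfl|rfl|rfl <;> tauto
  · rintro ⟨h1, h2⟩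
    refine ⟨h1, ?_⟩
    rcases h2 with h|h|h
    exacts [⟨p₁, by tauto⟩, ⟨p₂, by tauto⟩, ⟨p₃, by tauto⟩]

lemma disj_pA_pB [Fintype V] {G : SimpleGraph V} [DecidableRel G.Adj] {pa pb pc p₁ p₂ p₃ : V}
    (hpc : ∀ u, zP G p₁ p₂ p₃ u → G.Adj pc u) :
    Disjoint (pAset G p₁ p₂ p₃) (pBset G pa pb pc p₁ p₂ p₃) := by
  rw [Finset.disjoint_left]
  intro s hs hs'
  obtain ⟨a, b, hza, hzb, hab, hn, rfl⟩ := mem_pAset.mp hs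
  obtain ⟨c, d, hy, hz, hadj, hcd⟩ := mem_pBset.mp hs'
  rcases mem_of_pair_eq_fst hcd with rfl|rfl
  · exact hy.2.2.2 (hpc _ hza)
  · exact hy.2.2.2 (hpc _ hzb)

lemma disj_pB_pB [Fintype V] {G : SimpleGraph V} [DecidableRel G.Adj]
    {pa pb pc pa' pb' pc' p₁ p₂ p₃ : V}
    (h1 : ∀ u, yP G pa pb pc u → yP G pa' pb' pc' u → False)
    (h2 : ∀ u, zP G p₁ p₂ p₃ u → yP G pa' pb' pc' u → False) :
    Disjoint (pBset G pa pb pc p₁ p₂ p₃) (pBset G pa' pb' pc' p₁ p₂ p₃) := by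
  rw [Finset.disjoint_left]
  intro s hs hs'
  obtain ⟨a, b, hya, hzb, hadj, rfl⟩ := mem_pBset.mp hs
  obtain ⟨c, d, hy, hz, hadj', hcd⟩ := mem_pBset.mp hs'
  rcases mem_of_pair_eq_fst hcd with rfl|rfl
  · exact h1 _ hya hy
  · exact h2 _ hzb hy

lemma card_pAset [Fintype V] (G : SimpleGraph V) [DecidableRel G.Adj] (p₁ p₂ p₃ : V) :
    (pAset G p₁ p₂ p₃).card + mE G (tZ G p₁ p₂ p₃) (tZ G p₁ p₂ p₃)
      = (tZ G p₁ p₂ p₃).card.choose 2 := by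
  set Z := tZ G p₁ p₂ p₃ with hZ
  have hAC : mE G Z Z
      = (((Z ×ˢ Z).filter fun p => G.Adj p.1 p.2).image fun p => ({p.1,p.2} : Finset V)).card :=
    rfl
  have hdisj : Disjoint (pAset G p₁ p₂ p₃)
      (((Z ×ˢ Z).filter fun p => G.Adj p.1 p.2).image fun p => ({p.1,p.2} : Finset V)) := by
    rw [Finset.disjoint_left]
    intro s hs hs'
    obtain ⟨a, b, hza, hzb, hab, hn, rfl⟩ := mem_pAset.mp hs
    simp only [mem_image, mem_filter, mem_product, Prod.exists] at hs'
    obtain ⟨c, d, ⟨⟨hc, hd⟩, hadj⟩, hcd⟩ := hs'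
    rcases fpair_eq_iff.mp hcd with ⟨rfl, rfl⟩|⟨rfl, rfl⟩
    · exact hn hadj
    · exact hn hadj.symm
  have hun : pAset G p₁ p₂ p₃ ∪
      (((Z ×ˢ Z).filter fun p => G.Adj p.1 p.2).image fun p => ({p.1,p.2} : Finset V))
      = ((Z ×ˢ Z).filter fun p => p.1 ≠ p.2).image fun p => ({p.1,p.2} : Finset V) := by
    ext s
    simp only [mem_union, mem_image, mem_filter, mem_product, Prod.exists]
    constructor
    · rintro (hs | ⟨a, b, ⟨⟨ha, hb⟩, hadj⟩, rfl⟩)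
      · obtain ⟨a, b, hza, hzb, hab, hn, rfl⟩ := mem_pAset.mp hs
        have ha : a ∈ Z := by rw [hZ]; simp only [tZ, mem_filter, mem_univ, true_and]; exact hza
        have hb : b ∈ Z := by rw [hZ]; simp only [tZ, mem_filter, mem_univ, true_and]; exact hzb
        exact ⟨a, b, ⟨⟨ha, hb⟩, hab⟩, rfl⟩
      · exact ⟨a, b, ⟨⟨ha, hb⟩, hadj.ne⟩, rfl⟩
    · rintro ⟨a, b, ⟨⟨ha, hb⟩, hab⟩, rfl⟩
      by_cases hadj : G.Adj a b
      · exact Or.inr ⟨a, b, ⟨⟨ha, hb⟩, hadj⟩, rfl⟩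
      · refine Or.inl (mem_pAset.mpr ⟨a, b, ?_, ?_, hab, hadj, rfl⟩)
        · have := ha; rw [hZ] at this; simpa only [tZ, mem_filter, mem_univ, true_and, zP] using this
        · have := hb; rw [hZ] at this; simpa only [tZ, mem_filter, mem_univ, true_and, zP] using this
  have hAP : (((Z ×ˢ Z).filter fun p => p.1 ≠ p.2).image fun p => ({p.1,p.2} : Finset V))
      = Z.powersetCard 2 := by
    ext s
    simp only [mem_image, mem_filter, mem_product, Prod.exists, Finset.mem_powersetCard]
    constructor
    · rintro ⟨a, b, ⟨⟨ha, hb⟩, hab⟩, rfl⟩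
      refine ⟨?_, Finset.card_pair hab⟩
      intro u hu
      simp only [mem_insert, mem_singleton] at hu
      rcases hu with rfl|rfl <;> assumption
    · rintro ⟨hsub, hcard⟩
      obtain ⟨a, b, hab, rfl⟩ := Finset.card_eq_two.mp hcard
      exact ⟨a, b, ⟨⟨hsub (by simp), hsub (by simp)⟩, hab⟩, rfl⟩
  rw [hAC, ← Finset.card_union_of_disjoint hdisj, hun, hAP, Finset.card_powersetCard]


lemma main_union [Fintype V] (G : SimpleGraph V) [DecidableRel G.Adj]
    (p₁ p₂ p₃ : V) (h12 : G.Adj p₁ p₂) (h13 : G.Adj p₁ p₃) (h23 : G.Adj p₂ p₃) :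
    ((((adjW G {p₁, p₂, p₃}) ×ˢ (adjW G {p₁, p₂, p₃})).filter fun p =>
        p.1 ≠ p.2 ∧
        ∃ x ∈ ({p₁, p₂, p₃, p.1, p.2} : Finset V), ∃ y ∈ ({p₁, p₂, p₃, p.1, p.2} : Finset V),
          x ≠ y ∧ ¬ G.Adj x y ∧
          ∀ w ∈ ({p₁, p₂, p₃, p.1, p.2} : Finset V),
            ∀ z ∈ ({p₁, p₂, p₃, p.1, p.2} : Finset V),
              w ≠ z → ({w, z} : Finset V) ≠ {x, y} → G.Adj w z).image
      fun p => ({p.1, p.2} : Finset V))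
    = pAset G p₁ p₂ p₃ ∪ (pBset G p₁ p₂ p₃ p₁ p₂ p₃ ∪
        (pBset G p₁ p₃ p₂ p₁ p₂ p₃ ∪ pBset G p₂ p₃ p₁ p₁ p₂ p₃)) := by
  ext s
  simp only [mem_union, mem_image, mem_filter, mem_product, Prod.exists, ne_eq]
  constructor
  · rintro ⟨a, b, ⟨⟨ha, hb⟩, hne, hP⟩, rfl⟩
    rw [mem_adjW3] at ha hb
    obtain ⟨⟨a1, a2, a3⟩, -⟩ := ha
    obtain ⟨⟨b1, b2, b3⟩, -⟩ := hb
    rcases (classify h12 h13 h23 a1 a2 a3 b1 b2 b3 hne).mp hP with D|D|D|D|D|D|D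
    · exact Or.inl (mem_pAset.mpr ⟨a, b, D.1, D.2.1, hne, D.2.2, rfl⟩)
    · exact Or.inr (Or.inl (mem_pBset.mpr ⟨a, b, D.1, D.2.1, D.2.2, rfl⟩))
    · exact Or.inr (Or.inl (mem_pBset.mpr ⟨b, a, D.1, D.2.1, D.2.2.symm, Finset.pair_comm b a⟩))
    · exact Or.inr (Or.inr (Or.inl (mem_pBset.mpr ⟨a, b, D.1, D.2.1, D.2.2, rfl⟩)))
    · exact Or.inr (Or.inr (Or.inl (mem_pBset.mpr
        ⟨b, a, D.1, D.2.1, D.2.2.symm, Finset.pair_comm b a⟩)))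
    · exact Or.inr (Or.inr (Or.inr (mem_pBset.mpr ⟨a, b, D.1, D.2.1, D.2.2, rfl⟩)))
    · exact Or.inr (Or.inr (Or.inr (mem_pBset.mpr
        ⟨b, a, D.1, D.2.1, D.2.2.symm, Finset.pair_comm b a⟩)))
  · rintro (h | h | h | h)
    · obtain ⟨a, b, hza, hzb, hab, hn, rfl⟩ := mem_pAset.mp h
      refine ⟨a, b, ⟨⟨?_, ?_⟩, hab, (classify h12 h13 h23 hza.1.ne' hza.2.1.ne' hza.2.2.ne'
        hzb.1.ne' hzb.2.1.ne' hzb.2.2.ne' hab).mpr (Or.inl ⟨hza, hzb, hn⟩)⟩, rfl⟩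
      · exact mem_adjW3.mpr ⟨⟨hza.1.ne', hza.2.1.ne', hza.2.2.ne'⟩, Or.inl hza.1.symm⟩
      · exact mem_adjW3.mpr ⟨⟨hzb.1.ne', hzb.2.1.ne', hzb.2.2.ne'⟩, Or.inl hzb.1.symm⟩
    · obtain ⟨a, b, hy, hz, hadj, rfl⟩ := mem_pBset.mp h
      exact ⟨a, b, ⟨⟨mem_adjW3.mpr ⟨⟨hy.2.1.ne', hy.2.2.1.ne', hy.1⟩, Or.inl hy.2.1.symm⟩,
        mem_adjW3.mpr ⟨⟨hz.1.ne', hz.2.1.ne', hz.2.2.ne'⟩, Or.inl hz.1.symm⟩⟩, hadj.ne,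
        (classify h12 h13 h23 hy.2.1.ne' hy.2.2.1.ne' hy.1 hz.1.ne' hz.2.1.ne' hz.2.2.ne'
          hadj.ne).mpr (Or.inr (Or.inl ⟨hy, hz, hadj⟩))⟩, rfl⟩
    · obtain ⟨a, b, hy, hz, hadj, rfl⟩ := mem_pBset.mp h
      exact ⟨a, b, ⟨⟨mem_adjW3.mpr ⟨⟨hy.2.1.ne', hy.1, hy.2.2.1.ne'⟩, Or.inl hy.2.1.symm⟩,
        mem_adjW3.mpr ⟨⟨hz.1.ne', hz.2.1.ne', hz.2.2.ne'⟩, Or.inl hz.1.symm⟩⟩, hadj.ne,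
        (classify h12 h13 h23 hy.2.1.ne' hy.1 hy.2.2.1.ne' hz.1.ne' hz.2.1.ne' hz.2.2.ne'
          hadj.ne).mpr (Or.inr (Or.inr (Or.inr (Or.inl ⟨hy, hz, hadj⟩))))⟩, rfl⟩
    · obtain ⟨a, b, hy, hz, hadj, rfl⟩ := mem_pBset.mp h
      exact ⟨a, b, ⟨⟨mem_adjW3.mpr ⟨⟨hy.1, hy.2.1.ne', hy.2.2.1.ne'⟩, Or.inr (Or.inl hy.2.1.symm)⟩,
        mem_adjW3.mpr ⟨⟨hz.1.ne', hz.2.1.ne', hz.2.2.ne'⟩, Or.inl hz.1.symm⟩⟩, hadj.ne,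
        (classify h12 h13 h23 hy.1 hy.2.1.ne' hy.2.2.1.ne' hz.1.ne' hz.2.1.ne' hz.2.2.ne'
          hadj.ne).mpr (Or.inr (Or.inr (Or.inr (Or.inr (Or.inr (Or.inl ⟨hy, hz, hadj⟩))))))⟩, rfl⟩

end Helpers

/-- Theorem 3, Table 6, `K₅`-minus-an-edge row: for a triangle `{p₁,p₂,p₃}`, the number of
unordered pairs `{v₁,v₂} ⊆ adj({p₁,p₂,p₃})` such that the induced subgraph on
`{p₁,p₂,p₃,v₁,v₂}` is `K₅` minus exactly one edge equals
`C(n_z,2) − m(Z,Z) + m(Y₁₂,Z) + m(Y₁₃,Z) + m(Y₂₃,Z)`. -/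
theorem stmt17 [Fintype V] [DecidableEq V] (G : SimpleGraph V) [DecidableRel G.Adj]
    (p₁ p₂ p₃ : V) (h12 : G.Adj p₁ p₂) (h13 : G.Adj p₁ p₃) (h23 : G.Adj p₂ p₃) :
    (((((adjW G {p₁, p₂, p₃}) ×ˢ (adjW G {p₁, p₂, p₃})).filter fun p =>
        p.1 ≠ p.2 ∧
        ∃ x ∈ ({p₁, p₂, p₃, p.1, p.2} : Finset V), ∃ y ∈ ({p₁, p₂, p₃, p.1, p.2} : Finset V),
          x ≠ y ∧ ¬ G.Adj x y ∧
          ∀ w ∈ ({p₁, p₂, p₃, p.1, p.2} : Finset V),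
            ∀ z ∈ ({p₁, p₂, p₃, p.1, p.2} : Finset V),
              w ≠ z → ({w, z} : Finset V) ≠ {x, y} → G.Adj w z).image
      fun p => ({p.1, p.2} : Finset V)).card : ℤ)
      = (Nat.choose (tZ G p₁ p₂ p₃).card 2 : ℤ)
        - mE G (tZ G p₁ p₂ p₃) (tZ G p₁ p₂ p₃)
        + mE G (tY G p₁ p₂ p₃) (tZ G p₁ p₂ p₃)
        + mE G (tY G p₁ p₃ p₂) (tZ G p₁ p₂ p₃)
        + mE G (tY G p₂ p₃ p₁) (tZ G p₁ p₂ p₃) := by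
  
  have hd1 : Disjoint (pAset G p₁ p₂ p₃) (pBset G p₁ p₂ p₃ p₁ p₂ p₃ ∪
      (pBset G p₁ p₃ p₂ p₁ p₂ p₃ ∪ pBset G p₂ p₃ p₁ p₁ p₂ p₃)) := by
    rw [Finset.disjoint_union_right, Finset.disjoint_union_right]
    exact ⟨disj_pA_pB fun u hu => hu.2.2, disj_pA_pB fun u hu => hu.2.1,
      disj_pA_pB fun u hu => hu.1⟩
  have hd2 : Disjoint (pBset G p₁ p₂ p₃ p₁ p₂ p₃)
      (pBset G p₁ p₃ p₂ p₁ p₂ p₃ ∪ pBset G p₂ p₃ p₁ p₁ p₂ p₃) := by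
    rw [Finset.disjoint_union_right]
    exact ⟨disj_pB_pB (fun u hu hv => hu.2.2.2 hv.2.2.1) (fun u hz hv => hv.2.2.2 hz.2.1),
      disj_pB_pB (fun u hu hv => hu.2.2.2 hv.2.2.1) (fun u hz hv => hv.2.2.2 hz.1)⟩
  have hd3 : Disjoint (pBset G p₁ p₃ p₂ p₁ p₂ p₃) (pBset G p₂ p₃ p₁ p₁ p₂ p₃) :=
    disj_pB_pB (fun u hu hv => hu.2.2.2 hv.2.1) (fun u hz hv => hv.2.2.2 hz.1)
  have e1 : mE G (tY G p₁ p₂ p₃) (tZ G p₁ p₂ p₃) = (pBset G p₁ p₂ p₃ p₁ p₂ p₃).card := rfl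
  have e2 : mE G (tY G p₁ p₃ p₂) (tZ G p₁ p₂ p₃) = (pBset G p₁ p₃ p₂ p₁ p₂ p₃).card := rfl
  have e3 : mE G (tY G p₂ p₃ p₁) (tZ G p₁ p₂ p₃) = (pBset G p₂ p₃ p₁ p₁ p₂ p₃).card := rfl
  have h2 := card_pAset G p₁ p₂ p₃
  rw [main_union G p₁ p₂ p₃ h12 h13 h23, Finset.card_union_of_disjoint hd1,
    Finset.card_union_of_disjoint hd2, Finset.card_union_of_disjoint hd3, e1, e2, e3, ← h2]
  push_cast
  ring
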